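/- In the three-state process on the integer lattice Z with initial state probabilities p_w, p_s, p_e > 0 summing to 1 (assigned independently to each lattice point), the probability that lattice point 0 is eventually in state s is strictly greater than 1/(1 + p_w/p_s). -/

import Mathlib

open MeasureTheory

/-- The three states of the simplified process on `ℤ`:
`w` (wall), `s` (spreading), `e` (empty). -/
inductive St where
  | w : St
  | s : St
  | e : St
deriving DecidableEq

instance : MeasurableSpace St := ⊤

/-- One synchronous round: points in state `w` or `s` keep their state forever; a point
in state `e` with at least one of its two nearest neighbors in state `s` changes to `s`. -/
def evolve (ω : ℤ → St) : ℤ → St := fun i =>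
  match ω i with
  | St.e => if ω (i - 1) = St.s ∨ ω (i + 1) = St.s then St.s else St.e
  | x => x

/-- The initial probability of each state. -/
def stProb (pw ps pe : ℝ) : St → ℝ
  | St.w => pw
  | St.s => ps
  | St.e => pe

lemma evolve_s_aux {ω : ℤ → St} {i : ℤ} (h : ω i = St.s) : evolve ω i = St.s := by
  simp [evolve, h]

lemma iterate_e_aux (t : ℕ) {ω : ℤ → St} {i : ℤ} (h : ω i = St.e) :
    evolve^[t] ω i = St.e ∨ evolve^[t] ω i = St.s := by
  induction t with
  | zero => left; simpa
  | succ n ih =>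
    rw [Function.iterate_succ_apply']
    rcases ih with h' | h'
    · by_cases hc : evolve^[n] ω (i-1) = St.s ∨ evolve^[n] ω (i+1) = St.s
      · right; simp [evolve, h', hc]
      · left; simp [evolve, h', hc]
    · right; exact evolve_s_aux h'

lemma spread_right_aux : ∀ (n : ℕ) (ω : ℤ → St) (a : ℤ),
    ω (a + n) = St.s → (∀ k : ℕ, k < n → ω (a + k) = St.e) → evolve^[n] ω a = St.s := by
  intro n
  induction n with
  | zero => intro ω a hsa _; simpa using hsa
  | succ n ih =>
    intro ω a hsa hea
    have h0 : ω a = St.e := by simpa using hea 0 (Nat.succ_pos n)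
    have hstep : evolve^[n] ω (a + 1) = St.s := by
      apply ih
      · have h : (a + 1 + (n:ℤ)) = a + ((n+1 : ℕ):ℤ) := by push_cast; ring
        rw [h]; exact hsa
      · intro k hk
        have h : (a + 1 + (k:ℤ)) = a + ((k+1 : ℕ):ℤ) := by push_cast; ring
        rw [h]; exact hea (k+1) (by omega)
    rw [Function.iterate_succ_apply']
    rcases iterate_e_aux n h0 with h | h
    · simp [evolve, h, hstep]
    · exact evolve_s_aux h

lemma spread_left_aux : ∀ (n : ℕ) (ω : ℤ → St) (a : ℤ),
    ω (a - n) = St.s → (∀ k : ℕ, k < n → ω (a - k) = St.e) → evolve^[n] ω a = St.s := by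
  intro n
  induction n with
  | zero => intro ω a hsa _; simpa using hsa
  | succ n ih =>
    intro ω a hsa hea
    have h0 : ω a = St.e := by simpa using hea 0 (Nat.succ_pos n)
    have hstep : evolve^[n] ω (a - 1) = St.s := by
      apply ih
      · have h : (a - 1 - (n:ℤ)) = a - ((n+1 : ℕ):ℤ) := by push_cast; ring
        rw [h]; exact hsa
      · intro k hk
        have h : (a - 1 - (k:ℤ)) = a - ((k+1 : ℕ):ℤ) := by push_cast; ring
        rw [h]; exact hea (k+1) (by omega)
    rw [Function.iterate_succ_apply']
    rcases iterate_e_aux n h0 with h | h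
    · simp [evolve, h, hstep]
    · exact evolve_s_aux h

lemma prod_if_eq_aux (n : ℕ) (a b : ENNReal) :
    ∏ k ∈ Finset.range (n+1), (if k = n then a else b) = b ^ n * a := by
  rw [Finset.prod_range_succ, if_pos rfl]
  congr 1
  rw [Finset.prod_congr rfl (fun k hk => if_neg (by simp at hk; omega)),
    Finset.prod_const, Finset.card_range]

lemma cyl_measurable_aux (F : Finset ℤ) (f : ℤ → St) :
    MeasurableSet {ω : ℤ → St | ∀ i ∈ F, ω i = f i} := by
  have h : {ω : ℤ → St | ∀ i ∈ F, ω i = f i}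
      = ⋂ i ∈ F, (fun ω : ℤ → St => ω i) ⁻¹' {f i} := by
    ext ω; simp
  rw [h]
  exact MeasurableSet.biInter F.countable_toSet
    (fun i _ => measurable_pi_apply i trivial)

/-- Right cylinder target function. -/
def fRd (n : ℕ) : ℤ → St := fun i => if i = (n:ℤ) then St.s else St.e
/-- Right cylinder coordinates. -/
def FRd (n : ℕ) : Finset ℤ := (Finset.range (n+1)).image (fun k : ℕ => (k:ℤ))
/-- Right cylinder event. -/
def Rd (n : ℕ) : Set (ℤ → St) := {ω | ∀ i ∈ FRd n, ω i = fRd n i}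

/-- Left cylinder target function. -/
def fLd (n : ℕ) : ℤ → St :=
  fun i => if i = 1 then St.w else if i = -((n:ℤ)+1) then St.s else St.e
/-- Left cylinder coordinates. -/
def FLd (n : ℕ) : Finset ℤ := insert 1 ((Finset.range (n+2)).image (fun k : ℕ => -(k:ℤ)))
/-- Left cylinder event. -/
def Ld (n : ℕ) : Set (ℤ → St) := {ω | ∀ i ∈ FLd n, ω i = fLd n i}

lemma fRd_s (n : ℕ) : fRd n (n:ℤ) = St.s := by simp [fRd]
lemma fRd_e {n : ℕ} {i : ℤ} (h : i ≠ (n:ℤ)) : fRd n i = St.e := if_neg h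
lemma fLd_w (n : ℕ) : fLd n 1 = St.w := if_pos rfl
lemma fLd_s (n : ℕ) : fLd n (-((n:ℤ)+1)) = St.s := by
  have h1 : -((n:ℤ)+1) ≠ 1 := by omega
  unfold fLd
  rw [if_neg h1, if_pos rfl]
lemma fLd_e {n : ℕ} {i : ℤ} (h1 : i ≠ 1) (h2 : i ≠ -((n:ℤ)+1)) : fLd n i = St.e := by
  simp only [fLd, if_neg h1, if_neg h2]

lemma memFRd {n k : ℕ} (hk : k ≤ n) : (k:ℤ) ∈ FRd n :=
  Finset.mem_image.mpr ⟨k, Finset.mem_range.mpr (by omega), rfl⟩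

lemma memFLd {n k : ℕ} (hk : k ≤ n + 1) : (-(k:ℤ)) ∈ FLd n :=
  Finset.mem_insert_of_mem
    (Finset.mem_image.mpr ⟨k, Finset.mem_range.mpr (by omega), rfl⟩)

set_option maxHeartbeats 1000000 in
/-- In the three-state process on `ℤ` with i.i.d. initial states (`w`, `s`, `e` with
probabilities `p_w, p_s, p_e > 0` summing to `1`), the probability that lattice point `0`
is eventually in state `s` is strictly greater than `1/(1 + p_w/p_s)`. -/
theorem spreading_probability (pw ps pe : ℝ) (hw : 0 < pw) (hs : 0 < ps) (he : 0 < pe)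
    (hsum : pw + ps + pe = 1) (μ : Measure (ℤ → St)) [IsProbabilityMeasure μ]
    (hiid : ∀ (F : Finset ℤ) (f : ℤ → St),
      μ {ω | ∀ i ∈ F, ω i = f i} = ∏ i ∈ F, ENNReal.ofReal (stProb pw ps pe (f i))) :
    1 / (1 + pw / ps) < (μ {ω | ∃ t : ℕ, (evolve^[t] ω) 0 = St.s}).toReal := by
  have hpe1 : pe < 1 := by linarith
  obtain ⟨N, hN⟩ : ∃ N : ℕ, pe ^ N < pw / (1 + pw) :=
    exists_pow_lt_of_lt_one (div_pos hw (by linarith)) hpe1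
  have hu : pe ^ N * (1 + pw) < pw := (lt_div_iff₀ (by linarith)).mp hN
  -- measures of the cylinders
  have hμR : ∀ n, μ (Rd n) = ENNReal.ofReal (pe ^ n * ps) := by
    intro n
    rw [Rd, hiid (FRd n) (fRd n), FRd]
    rw [Finset.prod_image (by intro x _ y _ h; exact Nat.cast_injective h)]
    have hc : ∀ k ∈ Finset.range (n+1),
        ENNReal.ofReal (stProb pw ps pe (fRd n (k:ℤ)))
          = if k = n then ENNReal.ofReal ps else ENNReal.ofReal pe := by
      intro k _
      by_cases h : k = n
      · subst h
        rw [fRd_s, if_pos rfl]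
        rfl
      · have h' : (k:ℤ) ≠ (n:ℤ) := by omega
        rw [fRd_e h', if_neg h]
        rfl
    rw [Finset.prod_congr rfl hc, prod_if_eq_aux,
      ← ENNReal.ofReal_pow he.le, ← ENNReal.ofReal_mul (by positivity)]
  have hμL : ∀ n, μ (Ld n) = ENNReal.ofReal (pw * (pe ^ (n+1) * ps)) := by
    intro n
    rw [Ld, hiid (FLd n) (fLd n), FLd]
    rw [Finset.prod_insert (by
      simp only [Finset.mem_image, Finset.mem_range]
      rintro ⟨k, -, hk⟩
      omega)]
    rw [Finset.prod_image (by intro x _ y _ h; exact_mod_cast neg_inj.mp h)]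
    have hc : ∀ k ∈ Finset.range (n+2),
        ENNReal.ofReal (stProb pw ps pe (fLd n (-(k:ℤ))))
          = if k = n+1 then ENNReal.ofReal ps else ENNReal.ofReal pe := by
      intro k _
      by_cases h : k = n+1
      · have h2 : (-(k:ℤ)) = -((n:ℤ)+1) := by omega
        rw [h2, fLd_s, if_pos h]
        rfl
      · have h1' : (-(k:ℤ)) ≠ 1 := by omega
        have h2 : (-(k:ℤ)) ≠ -((n:ℤ)+1) := by omega
        rw [fLd_e h1' h2, if_neg h]
        rfl
    rw [Finset.prod_congr rfl hc, fLd_w,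
      show stProb pw ps pe St.w = pw from rfl]
    rw [show n + 2 = (n+1) + 1 from rfl, prod_if_eq_aux,
      ← ENNReal.ofReal_pow he.le, ← ENNReal.ofReal_mul (by positivity),
      ← ENNReal.ofReal_mul hw.le]
  set S : Set (ℤ → St) := {ω | ∃ t : ℕ, (evolve^[t] ω) 0 = St.s} with hSdef
  -- the cylinders are inside the spreading event
  have hRS : ∀ n, Rd n ⊆ S := by
    intro n ω hω
    refine ⟨n, spread_right_aux n ω 0 ?_ ?_⟩
    · rw [zero_add, hω _ (memFRd le_rfl), fRd_s]
    · intro k hk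
      have hne : (k:ℤ) ≠ (n:ℤ) := by omega
      rw [zero_add, hω _ (memFRd hk.le), fRd_e hne]
  have hLS : ∀ n, Ld n ⊆ S := by
    intro n ω hω
    refine ⟨n+1, spread_left_aux (n+1) ω 0 ?_ ?_⟩
    · have hmem := hω _ (memFLd (le_refl (n+1)))
      have h2 : (-(((n+1:ℕ)):ℤ)) = -((n:ℤ)+1) := by push_cast; ring
      rw [h2] at hmem
      rw [show (0:ℤ) - ((n+1:ℕ):ℤ) = -((n:ℤ)+1) by push_cast; ring, hmem, fLd_s]
    · intro k hk
      have hmem := hω _ (memFLd (show k ≤ n + 1 by omega))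
      have h1' : (-(k:ℤ)) ≠ 1 := by omega
      have h2 : (-(k:ℤ)) ≠ -((n:ℤ)+1) := by omega
      rw [show (0:ℤ) - (k:ℤ) = -(k:ℤ) by ring, hmem, fLd_e h1' h2]
  -- disjointness
  have hRkey : ∀ n m : ℕ, n < m → ∀ ω, ω ∈ Rd n → ω ∈ Rd m → False := by
    intro n m hnm ω h1 h2
    have e1 : ω (n:ℤ) = St.s := by rw [h1 _ (memFRd le_rfl), fRd_s]
    have hne : (n:ℤ) ≠ (m:ℤ) := by omega
    have e2 : ω (n:ℤ) = St.e := by rw [h2 _ (memFRd hnm.le), fRd_e hne]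
    rw [e1] at e2; exact St.noConfusion e2
  have hLkey : ∀ n m : ℕ, n < m → ∀ ω, ω ∈ Ld n → ω ∈ Ld m → False := by
    intro n m hnm ω h1 h2
    have hcast : (-(((n+1:ℕ)):ℤ)) = -((n:ℤ)+1) := by push_cast; ring
    have e1 : ω (-((n:ℤ)+1)) = St.s := by
      have := h1 _ (memFLd (le_refl (n+1)))
      rw [hcast] at this
      rw [this, fLd_s]
    have h1' : -((n:ℤ)+1) ≠ 1 := by omega
    have hb : -((n:ℤ)+1) ≠ -((m:ℤ)+1) := by omega
    have e2 : ω (-((n:ℤ)+1)) = St.e := by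
      have := h2 _ (memFLd (show n + 1 ≤ m + 1 by omega))
      rw [hcast] at this
      rw [this, fLd_e h1' hb]
    rw [e1] at e2; exact St.noConfusion e2
  have hRdisj : (↑(Finset.range (N+1)) : Set ℕ).PairwiseDisjoint Rd := by
    intro n _ m _ hnm
    refine Set.disjoint_left.mpr fun ω h1 h2 => ?_
    rcases lt_or_gt_of_ne hnm with h | h
    · exact hRkey n m h ω h1 h2
    · exact hRkey m n h ω h2 h1
  have hLdisj : (↑(Finset.range N) : Set ℕ).PairwiseDisjoint Ld := by
    intro n _ m _ hnm
    refine Set.disjoint_left.mpr fun ω h1 h2 => ?_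
    rcases lt_or_gt_of_ne hnm with h | h
    · exact hLkey n m h ω h1 h2
    · exact hLkey m n h ω h2 h1
  have hRL : ∀ n m : ℕ, ∀ ω, ω ∈ Rd n → ω ∈ Ld m → False := by
    intro n m ω h1 h2
    have hw1 : ω 1 = St.w := by
      rw [h2 _ (Finset.mem_insert_self 1 _), fLd_w]
    by_cases hn : n = 0
    · subst hn
      have e1 : ω 0 = St.s := by
        have := h1 _ (memFRd le_rfl)
        rw [Nat.cast_zero] at this
        rw [this]; rfl
      have hz : (-(((0:ℕ)):ℤ)) = 0 := by simp
      have h1' : (0:ℤ) ≠ 1 := by omega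
      have hb : (0:ℤ) ≠ -((m:ℤ)+1) := by omega
      have e2 : ω 0 = St.e := by
        have := h2 _ (memFLd (show (0:ℕ) ≤ m + 1 by omega))
        rw [hz] at this
        rw [this, fLd_e h1' hb]
      rw [e1] at e2; exact St.noConfusion e2
    · have h1m := memFRd (show (1:ℕ) ≤ n by omega)
      have := h1 _ h1m
      rw [Nat.cast_one] at this
      rw [hw1] at this
      by_cases heq : (1:ℤ) = (n:ℤ)
      · rw [show fRd n 1 = St.s from if_pos heq] at this
        exact St.noConfusion this
      · rw [fRd_e heq] at this
        exact St.noConfusion this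
  -- assembling the union
  set U1 : Set (ℤ → St) := ⋃ n ∈ Finset.range (N+1), Rd n with hU1
  set U2 : Set (ℤ → St) := ⋃ n ∈ Finset.range N, Ld n with hU2
  have hUdisj : Disjoint U1 U2 := by
    refine Set.disjoint_left.mpr fun ω h1 h2 => ?_
    simp only [hU1, hU2, Set.mem_iUnion] at h1 h2
    obtain ⟨n, -, hn⟩ := h1
    obtain ⟨m, -, hm⟩ := h2
    exact hRL n m ω hn hm
  have hU2meas : MeasurableSet U2 :=
    (Finset.range N).measurableSet_biUnion (fun n _ => cyl_measurable_aux _ _)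
  have hsub : U1 ∪ U2 ⊆ S := by
    apply Set.union_subset
    · exact Set.iUnion₂_subset fun n _ => hRS n
    · exact Set.iUnion₂_subset fun n _ => hLS n
  have hμU : μ (U1 ∪ U2)
      = ENNReal.ofReal (∑ n ∈ Finset.range (N+1), pe ^ n * ps)
        + ENNReal.ofReal (∑ n ∈ Finset.range N, pw * (pe ^ (n+1) * ps)) := by
    rw [measure_union hUdisj hU2meas, hU1, hU2,
      measure_biUnion_finset hRdisj (fun n _ => cyl_measurable_aux _ _),
      measure_biUnion_finset hLdisj (fun n _ => cyl_measurable_aux _ _),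
      ENNReal.ofReal_sum_of_nonneg (fun i _ => by positivity),
      ENNReal.ofReal_sum_of_nonneg (fun i _ => by positivity)]
    rw [Finset.sum_congr rfl (fun n _ => hμR n), Finset.sum_congr rfl (fun n _ => hμL n)]
  -- the real-number estimate
  set T1 : ℝ := ∑ n ∈ Finset.range (N+1), pe ^ n * ps with hT1
  set T2 : ℝ := ∑ n ∈ Finset.range N, pw * (pe ^ (n+1) * ps) with hT2
  set G1 : ℝ := ∑ n ∈ Finset.range (N+1), pe ^ n with hG1def
  set G2 : ℝ := ∑ n ∈ Finset.range N, pe ^ n with hG2def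
  have hT1' : T1 = ps * G1 := by
    rw [hT1, hG1def, Finset.mul_sum]
    exact Finset.sum_congr rfl fun n _ => by ring
  have hT2' : T2 = pw * pe * ps * G2 := by
    rw [hT2, hG2def, Finset.mul_sum]
    exact Finset.sum_congr rfl fun n _ => by ring
  have hG1 : (1 - pe) * G1 = 1 - pe ^ (N+1) := by
    have := geom_sum_mul pe (N+1)
    rw [hG1def]; nlinarith [this]
  have hG2 : (1 - pe) * G2 = 1 - pe ^ N := by
    have := geom_sum_mul pe N
    rw [hG2def]; nlinarith [this]
  have key : ps < ps * (1 - pe ^ (N+1)) + pw * pe * ps * (1 - pe ^ N) := by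
    have hprod : 0 < (pe * ps) * (pw - pe ^ N * (1 + pw)) := by
      apply mul_pos (mul_pos he hs); linarith
    nlinarith [pow_succ pe N, hprod]
  have hq : (1:ℝ) / (1 + pw / ps) = ps / (ps + pw) := by
    have hps : ps ≠ 0 := hs.ne'
    have hpsw : ps + pw ≠ 0 := by positivity
    field_simp
  have hT : ps / (ps + pw) < T1 + T2 := by
    rw [div_lt_iff₀ (by positivity)]
    have hspw : ps + pw = 1 - pe := by linarith
    rw [hspw, hT1', hT2']
    have heq : (ps * G1 + pw * pe * ps * G2) * (1 - pe)
        = ps * (1 - pe ^ (N+1)) + pw * pe * ps * (1 - pe ^ N) := by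
      linear_combination ps * hG1 + (pw * pe * ps) * hG2
    rw [heq]; exact key
  -- conclusion
  have hT1nn : (0:ℝ) ≤ T1 := by
    rw [hT1]; exact Finset.sum_nonneg fun i _ => by positivity
  have hT2nn : (0:ℝ) ≤ T2 := by
    rw [hT2]; exact Finset.sum_nonneg fun i _ => by positivity
  have hμS : ENNReal.ofReal (T1 + T2) ≤ μ S := by
    rw [ENNReal.ofReal_add hT1nn hT2nn, ← hμU]
    exact measure_mono hsub
  have hpos : (0:ℝ) < T1 + T2 := lt_trans (by positivity) hT
  have hlt : ENNReal.ofReal (ps / (ps + pw)) < μ S :=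
    lt_of_lt_of_le ((ENNReal.ofReal_lt_ofReal_iff hpos).mpr hT) hμS
  rw [hq]
  exact (ENNReal.ofReal_lt_iff_lt_toReal (by positivity) (measure_ne_top μ S)).mp hlt
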